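/- Let A be an m×n real matrix and e 1, …, e n the standard basis vectors of ℝ^n. Let H : ℕ → (n×n real matrices), p v : ℕ → vectors satisfy the implicit QR recursion: H 1 = I, and for every k with 1 ≤ k ≤ i: p k = (H k)ᵀ *ᵥ (e k), v k = A *ᵥ (p k), δ k = (e k) ⬝ᵥ (H k *ᵥ (Aᵀ *ᵥ (v k))) ≠ 0, and H (k+1) = H k - (1/δ k) • vecMulVec (H k *ᵥ (Aᵀ *ᵥ (v k))) ((H k)ᵀ *ᵥ (e k)). Then the scaling vectors are mutually orthogonal: (v j) ⬝ᵥ (v k) = 0 for all 1 ≤ j < k ≤ i. -/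
import Mathlib


open Matrix

private lemma vecMulVec_mulVec' {n m : ℕ} (a : Fin n → ℝ) (b : Fin m → ℝ)
    (x : Fin m → ℝ) : vecMulVec a b *ᵥ x = (b ⬝ᵥ x) • a := by
  ext j
  simp [vecMulVec, mulVec, dotProduct, Finset.mul_sum, mul_comm, mul_left_comm]

theorem implicit_qr_scaling_vectors_orthogonal {m n : ℕ} (i : ℕ)
    (A : Matrix (Fin m) (Fin n) ℝ)
    (e : ℕ → Fin n → ℝ)
    (he : ∀ k, 1 ≤ k → k ≤ i →
      e k = fun j : Fin n => if (j : ℕ) + 1 = k then (1 : ℝ) else 0)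
    (H : ℕ → Matrix (Fin n) (Fin n) ℝ)
    (p : ℕ → Fin n → ℝ) (v : ℕ → Fin m → ℝ)
    (hH1 : H 1 = 1)
    (hrec : ∀ k, 1 ≤ k → k ≤ i →
      p k = (H k)ᵀ *ᵥ e k ∧
      v k = A *ᵥ p k ∧
      e k ⬝ᵥ (H k *ᵥ (Aᵀ *ᵥ v k)) ≠ 0 ∧
      H (k + 1) = H k - (1 / (e k ⬝ᵥ (H k *ᵥ (Aᵀ *ᵥ v k)))) •
        vecMulVec (H k *ᵥ (Aᵀ *ᵥ v k)) ((H k)ᵀ *ᵥ e k)) :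
    ∀ j k, 1 ≤ j → j < k → k ≤ i → v j ⬝ᵥ v k = 0 := by
  -- key invariant
  have key : ∀ k, k ≤ i → ∀ j, 1 ≤ j → j < k → H k *ᵥ (Aᵀ *ᵥ v j) = 0 := by
    intro k
    induction k with
    | zero => intro _ j _ hj; omega
    | succ k ih =>
      intro hk j hj1 hjk
      have hk1 : 1 ≤ k := by omega
      have hki : k ≤ i := by omega
      obtain ⟨hp, hv, hδ, hHk⟩ := hrec k hk1 hki
      set u := Aᵀ *ᵥ v j with hu
      set δ := e k ⬝ᵥ (H k *ᵥ (Aᵀ *ᵥ v k)) with hδdef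
      have hdot : ((H k)ᵀ *ᵥ e k) ⬝ᵥ u = e k ⬝ᵥ (H k *ᵥ u) := by
        rw [mulVec_transpose]; exact (dotProduct_mulVec _ _ _).symm
      rw [hHk, sub_mulVec, smul_mulVec, vecMulVec_mulVec', hdot]
      rcases eq_or_lt_of_le (Nat.lt_succ_iff.mp hjk) with hjeq | hjlt
      · subst hjeq
        rw [← hu, ← hδdef, smul_smul, one_div, inv_mul_cancel₀ hδ, one_smul, sub_self]
      · have h0 : H k *ᵥ u = 0 := ih hki j hj1 hjlt
        simp [h0]
  intro j k hj hjk hki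
  obtain ⟨hpk, hvk, _, _⟩ := hrec k (by omega) hki
  rw [hvk, hpk, dotProduct_mulVec, ← mulVec_transpose, dotProduct_comm,
    mulVec_transpose, ← dotProduct_mulVec, key k hki j hj hjk, dotProduct_zero]
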